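/- The degree vector of the multiset {2^8, 3^2, 4^8, 5^2, 6^7, 7, 8^7, 9, 10^5, 11, 12^5, 13, 14^5, 16^3, 18^2, 20^2, 22, 24^2, 26, 28, 30} is not a nonnegative rational linear combination of the degree vectors of the 61 simple Q-reflection groups whose degrees are all at most 30, namely the Weyl groups of types A_n (1 ≤ n ≤ 29), B_n (2 ≤ n ≤ 15), D_n (4 ≤ n ≤ 16), G_2, F_4, E_6, E_7, and E_8. -/
import Mathlib

/-- Degrees of the Weyl group of type `Aₙ`: `{2, 3, ..., n+1}`. -/
def degA (n : ℕ) : Multiset ℕ := (Finset.Icc 2 (n+1)).val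
/-- Degrees of the Weyl group of type `Bₙ`: `{2, 4, ..., 2n}`. -/
def degB (n : ℕ) : Multiset ℕ := (Finset.Icc 1 n).val.map (fun k => 2*k)
/-- Degrees of the Weyl group of type `Dₙ`: `{2, 4, ..., 2n-2} ∪ {n}`. -/
def degD (n : ℕ) : Multiset ℕ := (Finset.Icc 1 (n-1)).val.map (fun k => 2*k) + {n}
def degG2 : Multiset ℕ := {2, 6}
def degF4 : Multiset ℕ := {2, 6, 8, 12}
def degE6 : Multiset ℕ := {2, 5, 6, 8, 9, 12}
def degE7 : Multiset ℕ := {2, 6, 8, 10, 12, 14, 18}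
def degE8 : Multiset ℕ := {2, 8, 12, 14, 18, 20, 24, 30}
/-- The degree multiset `{2⁸,3²,4⁸,5²,6⁷,7,8⁷,9,10⁵,11,12⁵,13,14⁵,16³,18²,20²,22,24²,26,28,30}`
of the rank 66 finite loop space. -/
def D66 : Multiset ℕ :=
  Multiset.replicate 8 2 + Multiset.replicate 2 3 + Multiset.replicate 8 4 +
  Multiset.replicate 2 5 + Multiset.replicate 7 6 + {7} + Multiset.replicate 7 8 +
  {9} + Multiset.replicate 5 10 + {11} + Multiset.replicate 5 12 + {13} +
  Multiset.replicate 5 14 + Multiset.replicate 3 16 + Multiset.replicate 2 18 +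
  Multiset.replicate 2 20 + {22} + Multiset.replicate 2 24 + {26} + {28} + {30}
/-- The degree vector of a multiset of degrees. -/
def degVec (M : Multiset ℕ) : Fin 30 → ℚ := fun i => (M.count ((i : ℕ) + 1) : ℚ)
/-- The list of degree multisets of the 61 simple `ℚ`-reflection groups all of whose
degrees are at most 30. -/
def LieList : List (Multiset ℕ) :=
  (List.range' 1 29).map degA ++ (List.range' 2 14).map degB ++
  (List.range' 4 13).map degD ++ [degG2, degF4, degE6, degE7, degE8]

/-- Positive part of the separating functional. -/
def Ypos : Fin 30 → ℕ :=
  ![0,2,0,0,0,0,1,0,0,0,0,1,0,0,1,0,0,0,0,0,0,4,0,0,0,0,0,0,0,1]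
/-- Negative part of the separating functional. -/
def Yneg : Fin 30 → ℕ :=
  ![0,0,1,1,0,0,0,1,0,0,0,0,1,0,0,1,0,0,0,0,0,0,0,3,0,1,0,0,0,0]

/-- The functional applied to a degree vector. -/
def fval (v : Fin 30 → ℚ) : ℚ := ∑ i, ((Ypos i : ℚ) - (Yneg i : ℚ)) * v i

lemma fval_degVec (g : Multiset ℕ) :
    fval (degVec g) =
      ((∑ i : Fin 30, Ypos i * g.count ((i : ℕ) + 1) : ℕ) : ℚ) -
      ((∑ i : Fin 30, Yneg i * g.count ((i : ℕ) + 1) : ℕ) : ℚ) := by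
  simp only [fval, degVec, sub_mul, Finset.sum_sub_distrib]
  push_cast
  ring

lemma fval_nonneg : ∀ j : Fin LieList.length, 0 ≤ fval (degVec (LieList.get j)) := by
  have key : ∀ j : Fin LieList.length,
      ∑ i : Fin 30, Yneg i * (LieList.get j).count ((i : ℕ) + 1) ≤
      ∑ i : Fin 30, Ypos i * (LieList.get j).count ((i : ℕ) + 1) := by decide
  intro j
  rw [fval_degVec, sub_nonneg]
  exact_mod_cast key j

lemma fval_D66_neg : fval (degVec D66) < 0 := by
  have key : ∑ i : Fin 30, Ypos i * D66.count ((i : ℕ) + 1) <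
      ∑ i : Fin 30, Yneg i * D66.count ((i : ℕ) + 1) := by decide
  rw [fval_degVec, sub_neg]
  exact_mod_cast key

/-- The degree vector of `D66` is not a nonnegative rational linear combination of the
degree vectors of the 61 simple `ℚ`-reflection groups with all degrees at most 30. -/
theorem D66_not_in_Lie_cone :
    ¬ ∃ c : Fin LieList.length → ℚ, (∀ j, 0 ≤ c j) ∧
      degVec D66 = ∑ j, c j • degVec (LieList.get j) := by
  rintro ⟨c, hc, h⟩
  have hf : fval (degVec D66) = ∑ j, c j * fval (degVec (LieList.get j)) := by
    rw [h]
    simp only [fval, Finset.sum_apply, Pi.smul_apply, smul_eq_mul, Finset.mul_sum]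
    rw [Finset.sum_comm]
    congr 1
    ext j
    congr 1
    ext i
    ring
  have hnn : 0 ≤ ∑ j, c j * fval (degVec (LieList.get j)) :=
    Finset.sum_nonneg fun j _ => mul_nonneg (hc j) (fval_nonneg j)
  exact absurd (hf ▸ hnn) (not_le.mpr fval_D66_neg)
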